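/- Let u, v be two distinct top vertices (u drawn above v), B a finite bottom set, and Adj a function assigning to each b ∈ B a nonempty subset Adj(b) ⊆ {u,v}; let k be the number of b ∈ B with Adj(b) = {u,v}. Then the minimum of cr(≺) over all linear orders ≺ on B for which there exists a red-edge selection r satisfying the red-edge constraint equals the minimum of cr(≺) over all linear orders ≺ on B, and both minima equal k·(k−1)/2. (This is Theorem 1: layered AF drawings of an AF with a stable extension of size 2 obtained by solving AFCrossMinREC and by solving AFCrossMin have the same number of total edge crossings.) -/

import Mathlib

/-- Crossing count of a 2-layer drawing: the number of ordered pairs `(a, b)` of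
bottom vertices with `b ≺ a`, `u ∈ Adj a` and `v ∈ Adj b`. -/
noncomputable def crossNum2 {T B : Type} (u v : T) (Adj : B → Set T) (lt : B → B → Prop) : ℕ :=
  {p : B × B | lt p.2 p.1 ∧ u ∈ Adj p.1 ∧ v ∈ Adj p.2}.ncard

/-- The red-edge constraint: no two red edges cross. -/
def REC2 {T B : Type} (u v : T) (r : B → T) (lt : B → B → Prop) : Prop :=
  ∀ a b : B, a ≠ b →
    ¬ ((r a = u ∧ r b = v ∧ lt b a) ∨ (r a = v ∧ r b = u ∧ lt a b))

open scoped Classical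

private lemma count_half {B : Type} [Fintype B] (S : Finset B) (lt : B → B → Prop)
    (hirr : ∀ a, ¬ lt a a)
    (h : ∀ a b : B, a ≠ b → (lt a b ↔ ¬ lt b a)) :
    ((S ×ˢ S).filter (fun p => lt p.2 p.1)).card * 2 = S.card * (S.card - 1) := by
  classical
  set A := (S ×ˢ S).filter (fun p => lt p.2 p.1) with hA
  set A' := (S ×ˢ S).filter (fun p => lt p.1 p.2) with hA'
  have hcard : A.card = A'.card := by
    apply Finset.card_bij (fun p _ => p.swap)
    · intro p hp
      simp only [hA, hA', Finset.mem_filter, Finset.mem_product] at *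
      exact ⟨⟨hp.1.2, hp.1.1⟩, hp.2⟩
    · intro p _ q _ hpq
      exact Prod.swap_injective hpq
    · intro p hp
      refine ⟨p.swap, ?_, by simp⟩
      simp only [hA, hA', Finset.mem_filter, Finset.mem_product] at *
      exact ⟨⟨hp.1.2, hp.1.1⟩, hp.2⟩
  have hdisj : Disjoint A A' := by
    rw [Finset.disjoint_left]
    intro p hp hp'
    simp only [hA, hA', Finset.mem_filter] at hp hp'
    by_cases hpe : p.1 = p.2
    · exact hirr p.1 (by rw [hpe] at hp' ⊢; exact hp'.2)
    · exact (h p.1 p.2 hpe).mp hp'.2 hp.2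
  have hunion : A ∪ A' = S.offDiag := by
    ext p
    simp only [hA, hA', Finset.mem_union, Finset.mem_filter, Finset.mem_product,
      Finset.mem_offDiag]
    constructor
    · rintro (⟨⟨h1, h2⟩, h3⟩ | ⟨⟨h1, h2⟩, h3⟩)
      · exact ⟨h1, h2, fun he => hirr p.2 (he ▸ h3)⟩
      · exact ⟨h1, h2, fun he => hirr p.2 (he ▸ h3)⟩
    · rintro ⟨h1, h2, h3⟩
      by_cases hlt : lt p.2 p.1
      · exact Or.inl ⟨⟨h1, h2⟩, hlt⟩
      · exact Or.inr ⟨⟨h1, h2⟩, (h p.1 p.2 h3).mpr hlt⟩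
  have := Finset.card_union_of_disjoint hdisj
  rw [hunion, Finset.offDiag_card, ← hcard] at this
  have hm : S.card * S.card - S.card = S.card * (S.card - 1) := by
    cases S.card with
    | zero => rfl
    | succ n => rw [Nat.mul_succ, Nat.succ_sub_one, Nat.add_sub_cancel]
  omega

private lemma half_lemma {B : Type} [Fintype B] (S : Set B) (lt : B → B → Prop)
    (hirr : ∀ a, ¬ lt a a) (h : ∀ a b : B, a ≠ b → (lt a b ↔ ¬ lt b a)) :
    {p : B × B | p.1 ∈ S ∧ p.2 ∈ S ∧ lt p.2 p.1}.ncard * 2 = S.ncard * (S.ncard - 1) := by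
  classical
  have hSf : S.Finite := S.toFinite
  have h1 : {p : B × B | p.1 ∈ S ∧ p.2 ∈ S ∧ lt p.2 p.1}
      = ↑((hSf.toFinset ×ˢ hSf.toFinset).filter (fun p => lt p.2 p.1)) := by
    ext p
    simp [Set.Finite.mem_toFinset, Finset.mem_product, and_assoc]
  rw [h1, Set.ncard_coe_finset, count_half _ lt hirr h,
    Set.ncard_eq_toFinset_card S hSf]


/-- Theorem 1: for an AF with a stable extension of size two (modelled as a 2-layer
drawing whose top layer consists of `u` above `v` and whose bottom set is `B`),
the minimum number of crossings over orders admitting a red-edge selection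
satisfying the red-edge constraint (AFCrossMinREC) equals the minimum number of
crossings over all orders (AFCrossMin), and both equal `k * (k - 1) / 2` where `k`
is the number of common neighbors. -/
theorem stmt0 {T B : Type} [Fintype B] (u v : T) (huv : u ≠ v)
    (Adj : B → Set T) (hsub : ∀ b, Adj b ⊆ {u, v}) (hne : ∀ b, (Adj b).Nonempty)
    (k : ℕ) (hk : k = {b : B | Adj b = {u, v}}.ncard) :
    sInf {n : ℕ | ∃ lt : B → B → Prop, IsStrictTotalOrder B lt ∧
        (∃ r : B → T, (∀ b, r b ∈ Adj b) ∧ REC2 u v r lt) ∧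
        crossNum2 u v Adj lt = n}
      = sInf {n : ℕ | ∃ lt : B → B → Prop, IsStrictTotalOrder B lt ∧
          crossNum2 u v Adj lt = n} ∧
    sInf {n : ℕ | ∃ lt : B → B → Prop, IsStrictTotalOrder B lt ∧
        (∃ r : B → T, (∀ b, r b ∈ Adj b) ∧ REC2 u v r lt) ∧
        crossNum2 u v Adj lt = n}
      = k * (k - 1) / 2 ∧
    sInf {n : ℕ | ∃ lt : B → B → Prop, IsStrictTotalOrder B lt ∧
        crossNum2 u v Adj lt = n}
      = k * (k - 1) / 2 := by
  classical
  set S : Set B := {b : B | Adj b = {u, v}} with hS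
  -- basic membership facts
  have hmem : ∀ b, b ∈ S → u ∈ Adj b ∧ v ∈ Adj b := by
    intro b hb
    rw [Set.mem_setOf_eq] at hb
    rw [hb]
    exact ⟨Set.mem_insert _ _, Set.mem_insert_iff.mpr (Or.inr rfl)⟩
  have hmem' : ∀ b, u ∈ Adj b → v ∈ Adj b → b ∈ S := by
    intro b hu hv
    rw [Set.mem_setOf_eq]
    refine Set.Subset.antisymm (hsub b) ?_
    intro x hx
    rcases Set.mem_insert_iff.mp hx with rfl | hx
    · exact hu
    · rw [Set.mem_singleton_iff] at hx; subst hx; exact hv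
  -- the construction
  set N : ℕ := Fintype.card B with hN
  set e : B ≃ Fin N := Fintype.equivFin B with he
  set ρ : B → ℕ := fun b => if u ∈ Adj b then (if v ∈ Adj b then 1 else 0) else 2 with hρ
  set f : B → ℕ := fun b => ρ b * N + (e b).val with hf
  have hρ1 : ∀ b, u ∈ Adj b → ρ b ≤ 1 := by
    intro b hb
    simp only [hρ, if_pos hb]
    split_ifs <;> omega
  have hρ2 : ∀ b, v ∈ Adj b → 1 ≤ ρ b := by
    intro b hb
    simp only [hρ]
    split_ifs <;> omega
  have hρeq : ∀ b, ρ b = 1 → b ∈ S := by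
    intro b hb
    simp only [hρ] at hb
    split_ifs at hb with h1 h2
    · exact hmem' b h1 h2
    · omega
  have hfmono : ∀ a b, ρ a < ρ b → f a < f b := by
    intro a b hab
    have hNa : (e a).val < N := (e a).isLt
    calc f a = ρ a * N + (e a).val := rfl
      _ < ρ a * N + N := Nat.add_lt_add_left hNa _
      _ = (ρ a + 1) * N := (Nat.succ_mul _ _).symm
      _ ≤ ρ b * N := Nat.mul_le_mul_right N (by omega)
      _ ≤ f b := Nat.le_add_right _ _
  have hlt₀ρ : ∀ a b, f a < f b → ρ a ≤ ρ b := by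
    intro a b hab
    by_contra hc
    exact absurd (hfmono b a (by omega)) (by omega)
  have finj : Function.Injective f := by
    intro a b hab
    have hρab : ρ a = ρ b := by
      by_contra hc
      rcases Nat.lt_or_ge (ρ a) (ρ b) with h1 | h1
      · exact absurd hab (Nat.ne_of_lt (hfmono a b h1))
      · exact absurd hab.symm (Nat.ne_of_lt (hfmono b a (by omega)))
    have hval : (e a).val = (e b).val := by
      simp only [hf, hρab] at hab
      omega
    exact e.injective (Fin.ext hval)
  set lt₀ : B → B → Prop := fun a b => f a < f b with hlt₀
  have hst₀ : IsStrictTotalOrder B lt₀ :=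
    { irrefl := fun a => Nat.lt_irrefl _
      trans := fun a b c hab hbc => Nat.lt_trans hab hbc
      trichotomous := by
        intro a b hab hba
        rcases Nat.lt_trichotomy (f a) (f b) with h1 | h1 | h1
        · exact absurd h1 hab
        · exact finj h1
        · exact absurd h1 hba }
  -- conditions of half_lemma for any strict total order
  have hcond : ∀ (lt : B → B → Prop), IsStrictTotalOrder B lt →
      (∀ a, ¬ lt a a) ∧ (∀ a b : B, a ≠ b → (lt a b ↔ ¬ lt b a)) := by
    intro lt hst
    haveI := hst
    refine ⟨fun a => irrefl a, fun a b hab => ⟨fun h1 h2 => ?_, fun h1 => ?_⟩⟩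
    · exact irrefl a (_root_.trans h1 h2)
    · rcases trichotomous_of lt a b with h2 | h2 | h2
      · exact h2
      · exact absurd h2 hab
      · exact absurd h2 h1
  -- characterization of the crossing set of lt₀
  have hchar : {p : B × B | lt₀ p.2 p.1 ∧ u ∈ Adj p.1 ∧ v ∈ Adj p.2}
      = {p : B × B | p.1 ∈ S ∧ p.2 ∈ S ∧ lt₀ p.2 p.1} := by
    ext p
    simp only [Set.mem_setOf_eq]
    constructor
    · rintro ⟨hlt, hu, hv⟩
      have h1 : ρ p.1 ≤ 1 := hρ1 _ hu
      have h2 : 1 ≤ ρ p.2 := hρ2 _ hv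
      have h3 : ρ p.2 ≤ ρ p.1 := hlt₀ρ _ _ hlt
      exact ⟨hρeq _ (by omega), hρeq _ (by omega), hlt⟩
    · rintro ⟨h1, h2, hlt⟩
      exact ⟨hlt, (hmem _ h1).1, (hmem _ h2).2⟩
  -- crossing count of lt₀
  have hcnt₀ : crossNum2 u v Adj lt₀ * 2 = k * (k - 1) := by
    rw [crossNum2, hchar, hk]
    exact half_lemma S lt₀ (hcond lt₀ hst₀).1 (hcond lt₀ hst₀).2
  have hcr₀ : crossNum2 u v Adj lt₀ = k * (k - 1) / 2 := by omega
  -- red-edge selection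
  set r : B → T := fun b => if u ∈ Adj b then u else v with hr
  have hrmem : ∀ b, r b ∈ Adj b := by
    intro b
    simp only [hr]
    split_ifs with h1
    · exact h1
    · obtain ⟨x, hx⟩ := hne b
      rcases Set.mem_insert_iff.mp (hsub b hx) with rfl | hx2
      · exact absurd hx h1
      · rw [Set.mem_singleton_iff] at hx2; subst hx2; exact hx
  have hru : ∀ b, r b = u → u ∈ Adj b := by
    intro b hb
    simp only [hr] at hb
    by_contra hc
    rw [if_neg hc] at hb
    exact huv hb.symm
  have hrv : ∀ b, r b = v → ρ b = 2 := by
    intro b hb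
    simp only [hr] at hb
    have hc : u ∉ Adj b := by
      intro hu2
      rw [if_pos hu2] at hb
      exact huv hb
    simp only [hρ, if_neg hc]
  have hrec : REC2 u v r lt₀ := by
    intro a b hab
    rintro (⟨ha, hb, hlt⟩ | ⟨ha, hb, hlt⟩)
    · have h1 : ρ a ≤ 1 := hρ1 a (hru a ha)
      have h2 : ρ b = 2 := hrv b hb
      have h3 : ρ b ≤ ρ a := hlt₀ρ _ _ hlt
      omega
    · have h1 : ρ b ≤ 1 := hρ1 b (hru b hb)
      have h2 : ρ a = 2 := hrv a ha
      have h3 : ρ a ≤ ρ b := hlt₀ρ _ _ hlt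
      omega
  -- lower bound for any strict total order
  have hlow : ∀ (lt : B → B → Prop), IsStrictTotalOrder B lt →
      k * (k - 1) / 2 ≤ crossNum2 u v Adj lt := by
    intro lt hst
    have h2 : {p : B × B | p.1 ∈ S ∧ p.2 ∈ S ∧ lt p.2 p.1}.ncard * 2 = k * (k - 1) := by
      rw [hk]
      exact half_lemma S lt (hcond lt hst).1 (hcond lt hst).2
    have hsubset : {p : B × B | p.1 ∈ S ∧ p.2 ∈ S ∧ lt p.2 p.1}
        ⊆ {p : B × B | lt p.2 p.1 ∧ u ∈ Adj p.1 ∧ v ∈ Adj p.2} := by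
      rintro p ⟨h1, h2', h3⟩
      exact ⟨h3, (hmem _ h1).1, (hmem _ h2').2⟩
    have hle := Set.ncard_le_ncard hsubset (Set.toFinite _)
    rw [crossNum2]
    omega
  -- assemble
  set m : ℕ := k * (k - 1) / 2 with hm
  have hmemREC : m ∈ {n : ℕ | ∃ lt : B → B → Prop, IsStrictTotalOrder B lt ∧
      (∃ r : B → T, (∀ b, r b ∈ Adj b) ∧ REC2 u v r lt) ∧
      crossNum2 u v Adj lt = n} := ⟨lt₀, hst₀, ⟨r, hrmem, hrec⟩, hcr₀⟩
  have hmemAll : m ∈ {n : ℕ | ∃ lt : B → B → Prop, IsStrictTotalOrder B lt ∧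
      crossNum2 u v Adj lt = n} := ⟨lt₀, hst₀, hcr₀⟩
  have heq1 : sInf {n : ℕ | ∃ lt : B → B → Prop, IsStrictTotalOrder B lt ∧
      (∃ r : B → T, (∀ b, r b ∈ Adj b) ∧ REC2 u v r lt) ∧
      crossNum2 u v Adj lt = n} = m := by
    refine le_antisymm (Nat.sInf_le hmemREC) (le_csInf ⟨m, hmemREC⟩ ?_)
    rintro n ⟨lt, hst, _, rfl⟩
    exact hlow lt hst
  have heq2 : sInf {n : ℕ | ∃ lt : B → B → Prop, IsStrictTotalOrder B lt ∧
      crossNum2 u v Adj lt = n} = m := by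
    refine le_antisymm (Nat.sInf_le hmemAll) (le_csInf ⟨m, hmemAll⟩ ?_)
    rintro n ⟨lt, hst, rfl⟩
    exact hlow lt hst
  exact ⟨heq1.trans heq2.symm, heq1, heq2⟩
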